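/- arXiv:1007.3933 — 2 statements merged into one kernel-verified Lean document; each statement's English description precedes it below -/
import Mathlib

section
/- In a finite abelian group, any element of maximal order generates a cyclic subgroup that is a direct summand of the group. -/
/-- In a finite abelian group, any element of maximal order (i.e. whose
order equals the exponent of the group) generates a cyclic subgroup that is a direct
summand of the group. -/
theorem stmt2 {A : Type*} [CommGroup A] [Finite A] (g : A)
    (hg : orderOf g = Monoid.exponent A) :
    ∃ H : Subgroup A, Subgroup.zpowers g ⊓ H = ⊥ ∧ Subgroup.zpowers g ⊔ H = ⊤ := by
  classical
  set n : ℕ := Monoid.exponent A with hn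
  have hn0 : 0 < n := Monoid.exponent_pos.2 (Monoid.ExponentExists.of_finite)
  set x : Additive A := Additive.ofMul g with hxdef
  have hx : addOrderOf x = n := hg
  set u : AddCircle (1 : ℚ) := (((1 : ℚ) / (n : ℚ) : ℚ) : AddCircle (1 : ℚ)) with hudef
  have hu : addOrderOf u = n := AddCircle.addOrderOf_period_div hn0
  -- well-definedness key
  have key : ∀ k j : ℤ, k • x = j • x → k • u = j • u := by
    intro k j h
    have h1 : (k - j) • x = 0 := by rw [sub_smul, h, sub_self]
    have hd : ((n : ℕ) : ℤ) ∣ k - j := by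
      rw [← hx]; exact addOrderOf_dvd_iff_zsmul_eq_zero.2 h1
    have h2 : (k - j) • u = 0 := by
      rw [← addOrderOf_dvd_iff_zsmul_eq_zero, hu]; exact hd
    rw [sub_smul, sub_eq_zero] at h2
    exact h2
  set M : AddSubgroup (Additive A) := AddSubgroup.zmultiples x with hMdef
  have memM : ∀ k : ℤ, k • x ∈ M := fun k => AddSubgroup.mem_zmultiples_iff.2 ⟨k, rfl⟩
  let c : M → AddCircle (1 : ℚ) :=
    fun m => (Classical.choose (AddSubgroup.mem_zmultiples_iff.1 m.2)) • u
  have hc : ∀ (m : M) (k : ℤ), k • x = (m : Additive A) → c m = k • u := by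
    intro m k hk
    exact (key _ _ ((Classical.choose_spec (AddSubgroup.mem_zmultiples_iff.1 m.2)).trans
      hk.symm)).symm ▸ rfl
  let χ₀ : M →+ AddCircle (1 : ℚ) :=
    { toFun := c
      map_zero' := by
        have := hc 0 0 (by simp)
        simpa using this
      map_add' := by
        intro a b
        obtain ⟨ka, hka⟩ := AddSubgroup.mem_zmultiples_iff.1 a.2
        obtain ⟨kb, hkb⟩ := AddSubgroup.mem_zmultiples_iff.1 b.2
        show c (a + b) = c a + c b
        rw [hc a ka hka, hc b kb hkb, hc (a + b) (ka + kb)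
          (by rw [add_smul, hka, hkb]; rfl), add_smul] }
  obtain ⟨χ, hχ⟩ := (Module.Baer.of_divisible (AddCircle (1 : ℚ))).extension_property_addMonoidHom
    M.subtype Subtype.coe_injective χ₀
  have hχx : ∀ k : ℤ, χ (k • x) = k • u := by
    intro k
    have h1 := DFunLike.congr_fun hχ ⟨k • x, memM k⟩
    have h2 : χ₀ ⟨k • x, memM k⟩ = k • u := hc ⟨k • x, memM k⟩ k rfl
    simpa [h2] using h1
  -- torsion elements of AddCircle are multiples of u
  have torsion : ∀ t : AddCircle (1 : ℚ), n • t = 0 → ∃ k : ℤ, k • u = t := by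
    intro t ht
    obtain ⟨q, rfl⟩ := QuotientAddGroup.mk_surjective t
    rw [← AddCircle.coe_nsmul, AddCircle.coe_eq_zero_iff] at ht
    obtain ⟨m, hm⟩ := ht
    refine ⟨m, ?_⟩
    rw [← AddCircle.coe_zsmul]
    congr 1
    have hnq : (n : ℚ) ≠ 0 := Nat.cast_ne_zero.2 hn0.ne'
    have : (m : ℚ) = n * q := by
      simpa [zsmul_eq_mul, nsmul_eq_mul] using hm
    rw [zsmul_eq_mul, this, mul_one_div, mul_div_cancel_left₀ _ hnq]
  -- the complement
  let H : Subgroup A :=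
    { carrier := {a : A | χ (Additive.ofMul a) = 0}
      one_mem' := by simpa using map_zero χ
      mul_mem' := by
        intro a b ha hb
        have : χ (Additive.ofMul a + Additive.ofMul b) = 0 := by
          rw [map_add, ha, hb, add_zero]
        simpa using this
      inv_mem' := by
        intro a ha
        have : χ (-(Additive.ofMul a)) = 0 := by
          rw [map_neg, ha, neg_zero]
        simpa using this }
  have hH : ∀ a : A, a ∈ H ↔ χ (Additive.ofMul a) = 0 := fun a => Iff.rfl
  refine ⟨H, ?_, ?_⟩
  · rw [eq_bot_iff]
    rintro a ⟨ha1, ha2⟩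
    obtain ⟨k, rfl⟩ := Subgroup.mem_zpowers_iff.1 ha1
    have hk : χ (k • x) = 0 := ha2
    rw [hχx k] at hk
    have hd : ((n : ℕ) : ℤ) ∣ k := by
      rw [← hu]; exact addOrderOf_dvd_iff_zsmul_eq_zero.2 hk
    have : g ^ k = 1 := by
      rw [← orderOf_dvd_iff_zpow_eq_one, hg]; exact hd
    simp [this, Subgroup.mem_bot]
  · rw [eq_top_iff]
    intro a _
    have hta : n • χ (Additive.ofMul a) = 0 := by
      rw [← map_nsmul]
      have : (n : ℕ) • Additive.ofMul a = Additive.ofMul (a ^ n) := by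
        simp
      rw [this, hn]
      have : a ^ Monoid.exponent A = 1 := Monoid.pow_exponent_eq_one a
      rw [this]
      simpa using map_zero χ
    obtain ⟨k, hk⟩ := torsion _ hta
    have hmem : g ^ (-k) * a ∈ H := by
      rw [hH]
      have h1 : Additive.ofMul (g ^ (-k) * a) = (-k) • x + Additive.ofMul a := by
        simp [hxdef]
      rw [h1, map_add, hχx, neg_smul, hk, neg_add_cancel]
    have : g ^ k * (g ^ (-k) * a) ∈ Subgroup.zpowers g ⊔ H :=
      Subgroup.mul_mem_sup (Subgroup.zpow_mem_zpowers g k) hmem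
    simpa [← mul_assoc, ← zpow_add] using this
end

section
/- Let L/K be a Galois extension of fields of characteristic zero whose degree is a power of the prime l, with K not containing a primitive l-th root of unity, and let m be a power of l. Set L̃ = L(μ_m). Then the natural map K^×/(K^×)^m → L̃^×/(L̃^×)^m is injective. -/
open Polynomial

/-- Auxiliary lemma: the case of exponent `l` itself.  If `b ∈ Lt` satisfies
`b ^ l = a` with `a ∈ K^×`, then `a` is an `l`-th power in `K`. -/
theorem stmt7_aux {K L Lt : Type*} [Field K] [Field L] [Field Lt]
    [Algebra K L] [Algebra L Lt] [Algebra K Lt] [IsScalarTower K L Lt]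
    {l : ℕ} (hl : l.Prime) [Fact l.Prime] [NeZero l]
    [IsGalois K L] [FiniteDimensional K L] {k : ℕ}
    (hdeg : Module.finrank K L = l ^ k)
    (hζK : ¬∃ ζ₀ : K, IsPrimitiveRoot ζ₀ l)
    {m : ℕ} (hm0 : m ≠ 0) (hlm : l ∣ m)
    {ζ : Lt} (hζ : IsPrimitiveRoot ζ m)
    (hadj : Algebra.adjoin L {x : Lt | x ^ m = 1} = ⊤)
    [FiniteDimensional K Lt] [IsGalois K Lt]
    (a : K) (ha : a ≠ 0) (b : Lt) (hb : b ^ l = algebraMap K Lt a) :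
    ∃ c : K, c ^ l = a := by
  haveI : NeZero m := ⟨hm0⟩
  set ω : Lt := ζ ^ (m / l) with hωdef
  have hω : IsPrimitiveRoot ω l :=
    hζ.pow (Nat.pos_of_ne_zero hm0) (Nat.div_mul_cancel hlm).symm
  have hab0 : algebraMap K Lt a ≠ 0 := by
    simpa using ha
  have hb0 : b ≠ 0 := by
    rintro rfl
    exact hab0 (by simpa [zero_pow hl.ne_zero] using hb.symm)
  have hωl1 : ω ^ l = 1 := hω.pow_eq_one
  have hω0 : ω ≠ 0 := hω.ne_zero hl.ne_zero
  -- exponent helpers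
  have hωmod : ∀ C : ℕ, ω ^ C = ω ^ (C % l) := by
    intro C
    conv_lhs => rw [← Nat.div_add_mod C l]
    rw [pow_add, pow_mul, hωl1, one_pow, one_mul]
  have hωpow : ∀ A B : ℕ, (A : ZMod l) = (B : ZMod l) → ω ^ A = ω ^ B := by
    intro A B h
    rw [ZMod.natCast_eq_natCast_iff] at h
    rw [hωmod A, hωmod B, show A % l = B % l from h]
  have hωinj : ∀ A B : ℕ, ω ^ A = ω ^ B → (A : ZMod l) = (B : ZMod l) := by
    have main : ∀ A B : ℕ, B ≤ A → ω ^ A = ω ^ B → (A : ZMod l) = (B : ZMod l) := by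
      intro A B hBA h
      have h1 : ω ^ (A - B) * ω ^ B = ω ^ B := by
        rw [← pow_add, Nat.sub_add_cancel hBA, h]
      have h2 : ω ^ (A - B) = 1 :=
        mul_right_cancel₀ (pow_ne_zero B hω0) (h1.trans (one_mul _).symm)
      have h3 : l ∣ (A - B) := (hω.pow_eq_one_iff_dvd _).mp h2
      have h4 : ((A - B : ℕ) : ZMod l) = 0 := (ZMod.natCast_eq_zero_iff _ _).mpr h3
      calc (A : ZMod l) = (((A - B) + B : ℕ) : ZMod l) := by rw [Nat.sub_add_cancel hBA]
        _ = ((A - B : ℕ) : ZMod l) + (B : ZMod l) := by push_cast; ring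
        _ = (B : ZMod l) := by rw [h4, zero_add]
    intro A B h
    rcases le_total B A with hh | hh
    · exact main A B hh h
    · exact (main B A hh h.symm).symm
  have hfermat : ∀ (j : ℕ) (x : ZMod l), x ^ (l ^ j) = x := by
    intro j
    induction j with
    | zero => intro x; simp
    | succ j ih => intro x; rw [pow_succ, pow_mul, ih, ZMod.pow_card]
  -- action witnesses
  have hgζ : ∀ g : Lt ≃ₐ[K] Lt, ∃ i : ℕ, g ζ = ζ ^ i := by
    intro g
    have h1 : (g ζ) ^ m = 1 := by rw [← map_pow, hζ.pow_eq_one, map_one]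
    obtain ⟨i, -, hi⟩ := hζ.eq_pow_of_pow_eq_one h1
    exact ⟨i, hi.symm⟩
  have hgω : ∀ g : Lt ≃ₐ[K] Lt, ∃ e : ℕ, g ω = ω ^ e := by
    intro g
    have h1 : (g ω) ^ l = 1 := by rw [← map_pow, hωl1, map_one]
    obtain ⟨e, -, he⟩ := hω.eq_pow_of_pow_eq_one h1
    exact ⟨e, he.symm⟩
  have hgb : ∀ g : Lt ≃ₐ[K] Lt, ∃ i : ℕ, g b = ω ^ i * b := by
    intro g
    have h1 : (g b * b⁻¹) ^ l = 1 := by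
      rw [mul_pow, ← map_pow, hb, AlgEquiv.commutes, inv_pow, hb, mul_inv_cancel₀ hab0]
    obtain ⟨i, -, hi⟩ := hω.eq_pow_of_pow_eq_one h1
    refine ⟨i, ?_⟩
    rw [hi, inv_mul_cancel_right₀ hb0]
  -- the fixed field is K
  have hGal : IsGalois K Lt := inferInstance
  have heqbot : IntermediateField.fixedField (⊤ : Subgroup (Lt ≃ₐ[K] Lt)) = ⊥ :=
    ((IsGalois.tfae (F := K) (E := Lt)).out 0 1).mp hGal
  -- choose σ moving ω
  have hexσ : ∃ σ : Lt ≃ₐ[K] Lt, σ ω ≠ ω := by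
    by_contra hcon
    push_neg at hcon
    have hmem : ω ∈ IntermediateField.fixedField (⊤ : Subgroup (Lt ≃ₐ[K] Lt)) := by
      rintro ⟨g, -⟩
      exact hcon g
    rw [heqbot, IntermediateField.mem_bot] at hmem
    obtain ⟨c, hc⟩ := hmem
    exact hζK ⟨c, IsPrimitiveRoot.of_map_of_injective (by rwa [hc])
      (algebraMap K Lt).injective⟩
  obtain ⟨σ, hσ⟩ := hexσ
  obtain ⟨eσ, heσ⟩ := hgω σ
  obtain ⟨iσ, hiσ⟩ := hgb σ
  have heσ1 : (eσ : ZMod l) ≠ 1 := by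
    intro h
    apply hσ
    rw [heσ]
    calc ω ^ eσ = ω ^ 1 := hωpow eσ 1 (by rw [h, Nat.cast_one])
      _ = ω := pow_one ω
  -- τ = σ ^ (l ^ k) acts trivially on L
  set τ : Lt ≃ₐ[K] Lt := σ ^ (l ^ k) with hτdef
  have hσpow : ∀ j : ℕ, (σ ^ j) ω = ω ^ (eσ ^ j) := by
    intro j
    induction j with
    | zero => simp
    | succ j ih =>
      rw [pow_succ, AlgEquiv.mul_apply, heσ, map_pow, ih, ← pow_mul, ← pow_succ]
  have hτω : τ ω = ω ^ (eσ ^ (l ^ k)) := hσpow (l ^ k)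
  have hρ : AlgEquiv.restrictNormalHom (F := K) (K₁ := Lt) L τ = 1 := by
    rw [hτdef, map_pow]
    have hcard : Fintype.card (L ≃ₐ[K] L) = l ^ k := by
      rw [Fintype.card_eq_nat_card, IsGalois.card_aut_eq_finrank, hdeg]
    rw [← hcard]
    exact pow_card_eq_one
  have hτL : ∀ x : L, τ (algebraMap L Lt x) = algebraMap L Lt x := by
    intro x
    rw [← AlgEquiv.restrictNormal_commutes]
    rw [show τ.restrictNormal L = AlgEquiv.restrictNormalHom (F := K) (K₁ := Lt) L τ from rfl,
      hρ]
    rfl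
  -- key commutation
  have key : ∀ g : Lt ≃ₐ[K] Lt, σ (g b) = g (σ b) := by
    intro g
    set q : Lt ≃ₐ[K] Lt := σ⁻¹ * g⁻¹ * σ * g with hq
    have hcommζ : ∀ g' h' : Lt ≃ₐ[K] Lt, g' (h' ζ) = h' (g' ζ) := by
      intro g' h'
      obtain ⟨i, hi⟩ := hgζ g'
      obtain ⟨j, hj⟩ := hgζ h'
      rw [hi, hj, map_pow, map_pow, hi, hj, ← pow_mul, ← pow_mul, mul_comm]
    have hqζ : q ζ = ζ := by
      have h1 : q ζ = σ⁻¹ (g⁻¹ (σ (g ζ))) := by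
        rw [hq, AlgEquiv.mul_apply, AlgEquiv.mul_apply, AlgEquiv.mul_apply]
      rw [h1, hcommζ σ g]
      show σ⁻¹ (g⁻¹ (g (σ ζ))) = ζ
      rw [show (g⁻¹ : Lt ≃ₐ[K] Lt) (g (σ ζ)) = σ ζ from g.symm_apply_apply (σ ζ)]
      exact σ.symm_apply_apply ζ
    have hqω : q ω = ω := by rw [hωdef, map_pow, hqζ]
    -- τ commutes with q
    have hcomm : ∀ x : Lt, τ (q x) = q (τ x) := by
      intro x
      have hx : x ∈ Algebra.adjoin L {y : Lt | y ^ m = 1} := by rw [hadj]; trivial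
      induction hx using Algebra.adjoin_induction with
      | mem y hy =>
        obtain ⟨i, -, hi⟩ := hζ.eq_pow_of_pow_eq_one hy
        obtain ⟨s, hs⟩ := hgζ τ
        have h1 : q (ζ ^ i) = ζ ^ i := by rw [map_pow, hqζ]
        have h2 : τ (ζ ^ i) = ζ ^ (s * i) := by rw [map_pow, hs, ← pow_mul]
        have h3 : q (ζ ^ (s * i)) = ζ ^ (s * i) := by rw [map_pow, hqζ]
        rw [← hi, h1, h2, h3]
      | algebraMap r =>
        rw [hτL r, ← AlgEquiv.restrictNormal_commutes q L r, hτL]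
      | add x y hx hy ihx ihy => rw [map_add, map_add, ihx, ihy, map_add, map_add]
      | mul x y hx hy ihx ihy => rw [map_mul, map_mul, ihx, ihy, map_mul, map_mul]
    have hqτb : τ (q b) = q (τ b) := hcomm b
    obtain ⟨iq, hiq⟩ := hgb q
    obtain ⟨iτ, hiτ⟩ := hgb τ
    have e1 : τ (q b) = ω ^ (eσ ^ (l ^ k) * iq + iτ) * b := by
      rw [hiq, map_mul, map_pow, hτω, hiτ, ← pow_mul, ← mul_assoc, ← pow_add]
    have e2 : q (τ b) = ω ^ (iτ + iq) * b := by
      rw [hiτ, map_mul, map_pow, hqω, hiq, ← mul_assoc, ← pow_add]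
    have e3 : ((eσ ^ (l ^ k) * iq + iτ : ℕ) : ZMod l) = ((iτ + iq : ℕ) : ZMod l) := by
      apply hωinj
      have h4 := hqτb
      rw [e1, e2] at h4
      exact mul_right_cancel₀ hb0 h4
    push_cast at e3
    rw [hfermat k] at e3
    have e5 : ((eσ : ZMod l) - 1) * (iq : ZMod l) = 0 := by linear_combination e3
    have hiq0 : (iq : ZMod l) = 0 := by
      rcases mul_eq_zero.mp e5 with h | h
      · exact absurd (sub_eq_zero.mp h) heσ1
      · exact h
    have hqb : q b = b := by
      rw [hiq, hωpow iq 0 (by simpa using hiq0), pow_zero, one_mul]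
    -- unravel the commutator
    have h2 : (g⁻¹ * σ * g) b = σ b := by
      have h1 : (σ * q) b = σ b := by rw [AlgEquiv.mul_apply, hqb]
      rwa [show σ * q = g⁻¹ * σ * g by rw [hq]; group] at h1
    have h3 := congrArg g h2
    rw [← AlgEquiv.mul_apply, ← AlgEquiv.mul_apply,
      show g * (g⁻¹ * σ * g) = σ * g by group] at h3
    rw [AlgEquiv.mul_apply, AlgEquiv.mul_apply] at h3
    exact h3
  -- build the fixed element
  set t : ZMod l := ((eσ : ZMod l) - 1)⁻¹ * (iσ : ZMod l) with htdef
  have hne : (eσ : ZMod l) - 1 ≠ 0 := sub_ne_zero.mpr heσ1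
  set u : ℕ := (-t).val with hu
  have hcu : ((u : ℕ) : ZMod l) = -t := ZMod.natCast_zmod_val (-t)
  have hfix : ∀ g : Lt ≃ₐ[K] Lt, g (ω ^ u * b) = ω ^ u * b := by
    intro g
    obtain ⟨ig, hig⟩ := hgb g
    obtain ⟨eg, heg⟩ := hgω g
    have hk := key g
    have e1 : σ (g b) = ω ^ (eσ * ig + iσ) * b := by
      rw [hig, map_mul, map_pow, heσ, hiσ, ← pow_mul, ← mul_assoc, ← pow_add]
    have e2 : g (σ b) = ω ^ (eg * iσ + ig) * b := by
      rw [hiσ, map_mul, map_pow, heg, hig, ← pow_mul, ← mul_assoc, ← pow_add]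
    have e3 : ((eσ * ig + iσ : ℕ) : ZMod l) = ((eg * iσ + ig : ℕ) : ZMod l) := by
      apply hωinj
      rw [e1, e2] at hk
      exact mul_right_cancel₀ hb0 hk
    push_cast at e3
    have h5 : ((eσ : ZMod l) - 1) * (ig : ZMod l) = ((eg : ZMod l) - 1) * (iσ : ZMod l) := by
      linear_combination e3
    have hrel : (ig : ZMod l) = ((eg : ZMod l) - 1) * t := by
      apply mul_left_cancel₀ hne
      rw [h5, htdef]
      field_simp
    rw [map_mul, map_pow, heg, hig, ← pow_mul, ← mul_assoc, ← pow_add]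
    congr 1
    apply hωpow
    push_cast
    rw [hcu, hrel]
    ring
  have hmem : (ω ^ u * b) ∈ IntermediateField.fixedField (⊤ : Subgroup (Lt ≃ₐ[K] Lt)) := by
    rintro ⟨g, -⟩
    exact hfix g
  rw [heqbot, IntermediateField.mem_bot] at hmem
  obtain ⟨c, hc⟩ := hmem
  refine ⟨c, (algebraMap K Lt).injective ?_⟩
  rw [map_pow, hc, mul_pow, ← pow_mul, mul_comm u l, pow_mul, hωl1, one_pow, one_mul, hb]

/-- Let `L/K` be a Galois extension of characteristic-zero fields of
`l`-power degree with `ζ_l ∉ K`, `m` a power of `l`, and `Lt = L(μ_m)`.  Then the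
natural map `K^×/(K^×)^m → Lt^×/(Lt^×)^m` is injective: a nonzero element of `K` that
becomes an `m`-th power in `Lt` is already an `m`-th power in `K`. -/
theorem stmt7 {K L Lt : Type*} [Field K] [CharZero K] [Field L] [Field Lt]
    [Algebra K L] [Algebra L Lt] [Algebra K Lt] [IsScalarTower K L Lt]
    {l : ℕ} (hl : l.Prime)
    [IsGalois K L] [FiniteDimensional K L] {k : ℕ}
    (hdeg : Module.finrank K L = l ^ k)
    (hζK : ¬∃ ζ : K, IsPrimitiveRoot ζ l)
    {m : ℕ} {n : ℕ} (hm : m = l ^ n)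
    (hμ : ∃ ζ : Lt, IsPrimitiveRoot ζ m)
    (hadj : Algebra.adjoin L {x : Lt | x ^ m = 1} = ⊤)
    (a : K) (ha : a ≠ 0) (hb : ∃ b : Lt, b ^ m = algebraMap K Lt a) :
    ∃ c : K, c ^ m = a := by
  subst hm
  haveI : Fact l.Prime := ⟨hl⟩
  haveI : NeZero l := ⟨hl.ne_zero⟩
  rcases Nat.eq_zero_or_pos n with rfl | hn
  · exact ⟨a, by simpa using pow_one a⟩
  obtain ⟨ζ, hζ⟩ := hμ
  obtain ⟨b, hb⟩ := hb
  have hm0 : l ^ n ≠ 0 := pow_ne_zero n hl.ne_zero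
  haveI : NeZero (l ^ n) := ⟨hm0⟩
  -- the polynomial X^m - 1 splits in Lt
  have hXne : ((X : K[X]) ^ (l ^ n) - 1) ≠ 0 := by
    have := X_pow_sub_C_ne_zero (R := K) (Nat.pos_of_ne_zero hm0) 1
    simpa using this
  have hsplit : (((X : K[X]) ^ (l ^ n) - 1).map (algebraMap K Lt)).Splits := by
    have h0 := X_pow_sub_one_splits hζ
    simpa using h0
  -- a splitting polynomial for L over K
  obtain ⟨p, hpsep, hpsf⟩ := IsGalois.is_separable_splitting_field K L
  have hp0 : p ≠ 0 := fun h => (h ▸ hpsep).ne_zero rfl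
  set q : K[X] := p * ((X : K[X]) ^ (l ^ n) - 1) with hqdef
  have hq0 : q ≠ 0 := mul_ne_zero hp0 hXne
  have hqsplit : (q.map (algebraMap K Lt)).Splits := by
    rw [Polynomial.map_mul]
    apply Splits.mul
    · have h1 : (p.map (algebraMap K L)).Splits := hpsf.splits'
      have h2 := h1.map (algebraMap L Lt)
      rwa [map_map, ← IsScalarTower.algebraMap_eq] at h2
    · exact hsplit
  -- root sets
  have hsub1 : p.rootSet Lt ⊆ q.rootSet Lt := by
    intro x hx
    rw [mem_rootSet] at hx ⊢
    refine ⟨hq0, ?_⟩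
    rw [hqdef, map_mul, hx.2, zero_mul]
  have hsub2 : ∀ y : Lt, y ^ (l ^ n) = 1 → y ∈ q.rootSet Lt := by
    intro y hy
    rw [mem_rootSet]
    refine ⟨hq0, ?_⟩
    rw [hqdef, map_mul, map_sub, map_pow, map_one, aeval_X, hy, sub_self, mul_zero]
  have hadjoin : Algebra.adjoin K (q.rootSet Lt) = ⊤ := by
    rw [eq_top_iff]
    rintro x -
    have hx : x ∈ Algebra.adjoin L {y : Lt | y ^ (l ^ n) = 1} := by rw [hadj]; trivial
    induction hx using Algebra.adjoin_induction with
    | mem y hy => exact Algebra.subset_adjoin (hsub2 y hy)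
    | algebraMap r =>
      have h1 : r ∈ Algebra.adjoin K (p.rootSet L) := by
        rw [hpsf.adjoin_rootSet']; trivial
      have h2 : (IsScalarTower.toAlgHom K L Lt) r ∈
          (Algebra.adjoin K (p.rootSet L)).map (IsScalarTower.toAlgHom K L Lt) :=
        ⟨r, h1, rfl⟩
      rw [AlgHom.map_adjoin, Splits.image_rootSet hpsf.splits' (IsScalarTower.toAlgHom K L Lt)] at h2
      exact Algebra.adjoin_mono hsub1 h2
    | add x y hx hy ihx ihy => exact add_mem ihx ihy
    | mul x y hx hy ihx ihy => exact mul_mem ihx ihy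
  haveI hQsf : Polynomial.IsSplittingField K Lt q := ⟨hqsplit, hadjoin⟩
  haveI : FiniteDimensional K Lt := Polynomial.IsSplittingField.finiteDimensional Lt q
  haveI : Normal K Lt := Normal.of_isSplittingField q
  haveI : IsGalois K Lt := { }
  -- downward induction on the exponent
  have main : ∀ j : ℕ, j ≤ n → ∀ a : K, a ≠ 0 → ∀ b : Lt,
      b ^ (l ^ j) = algebraMap K Lt a → ∃ c : K, c ^ (l ^ j) = a := by
    intro j
    induction j with
    | zero => intro _ a _ b hb'; exact ⟨a, by simp⟩
    | succ j ih =>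
      intro hj a ha b hb'
      have hbl : (b ^ (l ^ j)) ^ l = algebraMap K Lt a := by
        rw [← pow_mul, ← pow_succ]; exact hb'
      obtain ⟨c, hc⟩ := stmt7_aux hl hdeg hζK hm0 (dvd_pow_self l (Nat.pos_of_ne_zero
        (by omega)).ne') hζ hadj a ha (b ^ (l ^ j)) hbl
      have hc0 : c ≠ 0 := by
        rintro rfl
        exact ha (by simpa [zero_pow hl.ne_zero] using hc.symm)
      -- primitive l^(j+1)-th root of unity
      have hsplitexp : l ^ n = l ^ (n - (j + 1)) * l ^ (j + 1) := by
        rw [← pow_add]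
        congr 1
        omega
      have hξ : IsPrimitiveRoot (ζ ^ (l ^ (n - (j + 1)))) (l ^ (j + 1)) :=
        hζ.pow (Nat.pos_of_ne_zero hm0) hsplitexp
      set ξ : Lt := ζ ^ (l ^ (n - (j + 1))) with hξdef
      -- ratio between b ^ (l ^ j) and algebraMap c is an l-th root of unity
      have himc0 : algebraMap K Lt c ≠ 0 := by simpa using hc0
      have hratio : (b ^ (l ^ j) * (algebraMap K Lt c)⁻¹) ^ l = 1 := by
        rw [mul_pow, hbl, inv_pow, ← map_pow, hc, mul_inv_cancel₀ (by simpa using ha)]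
      have hωlprim : IsPrimitiveRoot (ξ ^ (l ^ j)) l :=
        hξ.pow (Nat.pos_of_ne_zero (pow_ne_zero _ hl.ne_zero)) (pow_succ l j)
      haveI : NeZero (l ^ (j + 1)) := ⟨pow_ne_zero _ hl.ne_zero⟩
      obtain ⟨i, -, hi⟩ := hωlprim.eq_pow_of_pow_eq_one hratio
      -- so b ^ (l ^ j) = (ξ ^ i) ^ (l ^ j) * algebraMap c, i.e. (b * (ξ^i)⁻¹)^(l^j) = image c
      have hbne : b ≠ 0 := by
        rintro rfl
        exact ha (by simpa [zero_pow (pow_ne_zero (j + 1) hl.ne_zero)] using hb'.symm)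
      have hb2 : (b * (ξ ^ i)⁻¹) ^ (l ^ j) = algebraMap K Lt c := by
        have h1 : (ξ ^ i) ^ (l ^ j) = b ^ (l ^ j) * (algebraMap K Lt c)⁻¹ := by
          rw [← pow_mul, mul_comm i (l ^ j), pow_mul]
          exact hi
        rw [mul_pow, inv_pow, h1, mul_inv, inv_inv, ← mul_assoc,
          mul_inv_cancel₀ (pow_ne_zero _ hbne), one_mul]
      obtain ⟨d, hd⟩ := ih (by omega) c hc0 (b * (ξ ^ i)⁻¹) hb2
      exact ⟨d, by rw [pow_succ, pow_mul, hd, hc]⟩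
  exact main n le_rfl a ha b hb
end
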